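/- With the reflection x̃ = 2ζ(x) − x across ∂Ω in a tubular neighborhood, define the reflected backward heat kernel ρ̃(x,t) = (4π(s−t))^{−(n−1)/2} exp(−|x̃−y|²/(4(s−t))). Then for any unit vector a, (a·∇ρ̃)²/ρ̃ + (I − a⊗a)·∇²ρ̃ + ∂ₜρ̃ = Σ_{i,j,k} ((δ_{ij} − aᵢaⱼ) ∂_{x_j}(νᵢνₖ) (x̃ₖ − yₖ) / (s−t)) · ρ̃, where ν = ν(ζ(x)) is the outer unit normal at the projection point. In the computation one uses ∇|x̃−y|² = 2(I − 2ν⊗ν)(x̃−y) and ∇²_{ij}|x̃−y|² = 2δ_{ij} − 4Σₖ ∂_{x_j}(νᵢνₖ)(x̃ₖ−yₖ). -/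

import Mathlib

open scoped RealInnerProductSpace BigOperators

set_option maxHeartbeats 1000000

/- STATEMENT 11: for the reflected backward heat kernel
ρ̃(x,t) = (4π(s−t))^{−(n−1)/2} exp(−|x̃−y|²/(4(s−t))), with x̃ = 2ζ(x) − x and ∇ζ = I − ν⊗ν
(‖ν‖ = 1), one has the auxiliary identities
∇|x̃−y|² = 2(I − 2ν⊗ν)(x̃−y) and ∇²_{ij}|x̃−y|² = 2δ_{ij} − 4Σₖ ∂_{x_j}(νᵢνₖ)(x̃ₖ−yₖ),
and for any unit vector a,
(a·∇ρ̃)²/ρ̃ + (I − a⊗a)·∇²ρ̃ + ∂ₜρ̃ = Σ_{i,j,k}((δ_{ij}−aᵢaⱼ)∂_{x_j}(νᵢνₖ)(x̃ₖ−yₖ)/(s−t))·ρ̃. -/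
theorem reflected_backward_heat_kernel_identity
    (n : ℕ) (hn : 2 ≤ n) (y : EuclideanSpace ℝ (Fin n)) (s : ℝ)
    (ν : EuclideanSpace ℝ (Fin n) → EuclideanSpace ℝ (Fin n))
    (hν : ContDiff ℝ 1 ν) (hνunit : ∀ w, ‖ν w‖ = 1)
    (ζ : EuclideanSpace ℝ (Fin n) → EuclideanSpace ℝ (Fin n))
    (hζ : Differentiable ℝ ζ)
    (hDζ : ∀ w v, fderiv ℝ ζ w v = v - ⟪v, ν w⟫ • ν w)
    (m : EuclideanSpace ℝ (Fin n) → EuclideanSpace ℝ (Fin n))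
    (hm : ∀ w, m w = (2 : ℝ) • ζ w - w)
    (ρ' : EuclideanSpace ℝ (Fin n) → ℝ → ℝ)
    (hρ : ∀ w t, ρ' w t =
      (4 * Real.pi * (s - t)) ^ (-(((n : ℝ) - 1) / 2)) *
        Real.exp (-‖m w - y‖ ^ 2 / (4 * (s - t))))
    (x : EuclideanSpace ℝ (Fin n)) (t : ℝ) (ht : t < s)
    (a : EuclideanSpace ℝ (Fin n)) (ha : ‖a‖ = 1) :
    gradient (fun w => ‖m w - y‖ ^ 2) x =
        (2 : ℝ) • ((m x - y) - (2 : ℝ) • (⟪ν x, m x - y⟫ • ν x)) ∧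
    (∀ i j : Fin n,
      fderiv ℝ (fun z => fderiv ℝ (fun w => ‖m w - y‖ ^ 2) z (EuclideanSpace.single i 1)) x
          (EuclideanSpace.single j 1) =
        2 * (if i = j then (1 : ℝ) else 0) -
          4 * ∑ k : Fin n,
            fderiv ℝ (fun w => ν w i * ν w k) x (EuclideanSpace.single j 1) * (m x k - y k)) ∧
    (fderiv ℝ (fun z => ρ' z t) x a) ^ 2 / ρ' x t +
      (∑ i : Fin n, ∑ j : Fin n,
        ((if i = j then (1 : ℝ) else 0) - a i * a j) *
          fderiv ℝ (fun z => fderiv ℝ (fun w => ρ' w t) z (EuclideanSpace.single j 1)) x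
            (EuclideanSpace.single i 1)) +
      deriv (fun τ => ρ' x τ) t =
    (∑ i : Fin n, ∑ j : Fin n, ∑ k : Fin n,
        ((if i = j then (1 : ℝ) else 0) - a i * a j) *
          fderiv ℝ (fun w => ν w i * ν w k) x (EuclideanSpace.single j 1) *
          (m x k - y k) / (s - t)) * ρ' x t := by
  classical
  have hτ : (0:ℝ) < s - t := sub_pos.mpr ht
  have hτ0 : s - t ≠ 0 := ne_of_gt hτ
  -- ## derivative of m
  set M : EuclideanSpace ℝ (Fin n) → (EuclideanSpace ℝ (Fin n) →L[ℝ] EuclideanSpace ℝ (Fin n)) :=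
    fun z => (2:ℝ) • fderiv ℝ ζ z - ContinuousLinearMap.id ℝ _ with hMdef
  have hmD : ∀ z, HasFDerivAt m (M z) z := by
    intro z
    have hmeq : m = fun w => (2:ℝ) • ζ w - w := funext hm
    rw [hmeq]
    exact ((hζ z).hasFDerivAt.const_smul (2:ℝ)).sub (hasFDerivAt_id z)
  have hMapp : ∀ z v, M z v = v - (2 * ⟪v, ν z⟫) • ν z := by
    intro z v
    simp only [hMdef, ContinuousLinearMap.sub_apply, ContinuousLinearMap.smul_apply,
      ContinuousLinearMap.id_apply, hDζ, smul_sub, smul_smul]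
    module
  have hMcoord : ∀ z v k, M z v k = v k - 2 * ⟪v, ν z⟫ * ν z k := by
    intro z v k
    rw [hMapp]
    simp [PiLp.sub_apply, PiLp.smul_apply, smul_eq_mul, mul_assoc]
  have hMe : ∀ z (j k : Fin n), M z (EuclideanSpace.single j 1) k
      = (if k = j then (1:ℝ) else 0) - 2 * ν z j * ν z k := by
    intro z j k
    rw [hMcoord]
    simp [EuclideanSpace.single_apply, EuclideanSpace.inner_single_left]
  -- ## derivative of f = ‖m · - y‖²
  set Lf : EuclideanSpace ℝ (Fin n) → (EuclideanSpace ℝ (Fin n) →L[ℝ] ℝ) :=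
    fun z => (fderivInnerCLM ℝ (m z - y, m z - y)).comp ((M z).prod (M z)) with hLfdef
  have hfD : ∀ z, HasFDerivAt (fun w => ‖m w - y‖^2) (Lf z) z := by
    intro z
    have heq : (fun w => ‖m w - y‖^2) = fun w => ⟪m w - y, m w - y⟫ :=
      funext fun w => (real_inner_self_eq_norm_sq _).symm
    rw [heq]
    exact ((hmD z).sub_const y).inner ℝ ((hmD z).sub_const y)
  have hLfapp : ∀ z v, Lf z v = 2 * ⟪m z - y, v⟫ - (4 * ⟪v, ν z⟫) * ⟪ν z, m z - y⟫ := by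
    intro z v
    simp only [hLfdef, ContinuousLinearMap.comp_apply, ContinuousLinearMap.prod_apply,
      fderivInnerCLM_apply, hMapp]
    simp only [inner_sub_right, real_inner_smul_right, inner_sub_left, real_inner_smul_left]
    rw [real_inner_comm (m z) v, real_inner_comm y v, real_inner_comm (m z) (ν z),
      real_inner_comm y (ν z)]
    ring
  -- ## the gradient identity
  have hgrad : HasGradientAt (fun w => ‖m w - y‖^2)
      ((2 : ℝ) • ((m x - y) - (2 : ℝ) • (⟪ν x, m x - y⟫ • ν x))) x := by
    rw [hasGradientAt_iff_hasFDerivAt]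
    have h := hfD x
    have hdual : (InnerProductSpace.toDual ℝ (EuclideanSpace ℝ (Fin n)))
        ((2 : ℝ) • ((m x - y) - (2 : ℝ) • (⟪ν x, m x - y⟫ • ν x))) = Lf x := by
      ext v
      rw [InnerProductSpace.toDual_apply_apply, hLfapp]
      simp only [inner_smul_left, inner_sub_left, real_inner_smul_left, map_ofNat,
        RCLike.ofNat_mul_re, conj_trivial]
      rw [real_inner_comm (ν x) v]
      ring
    rw [hdual]
    exact h
  -- ## coordinate facts
  have hνsum : ∀ z, ∑ k : Fin n, ν z k * ν z k = 1 := by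
    intro z
    have h := real_inner_self_eq_norm_sq (ν z)
    rw [PiLp.inner_apply] at h
    simp only [RCLike.inner_apply, conj_trivial] at h
    simpa [hνunit z] using h
  have hasum : ∑ k : Fin n, a k * a k = 1 := by
    have h := real_inner_self_eq_norm_sq a
    rw [PiLp.inner_apply] at h
    simp only [RCLike.inner_apply, conj_trivial] at h
    simpa [ha] using h
  have husum : ∑ k : Fin n, (m x k - y k) * (m x k - y k) = ‖m x - y‖^2 := by
    have h := real_inner_self_eq_norm_sq (m x - y)
    rw [PiLp.inner_apply] at h
    simp only [RCLike.inner_apply, conj_trivial] at h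
    simpa [PiLp.sub_apply] using h
  -- ## coordinate formula for fderiv f
  have hgi : ∀ (i : Fin n),
      (fun z => fderiv ℝ (fun w => ‖m w - y‖ ^ 2) z (EuclideanSpace.single i 1))
        = fun z => 2 * (m z i - y i) - 4 * ∑ k : Fin n, ν z i * ν z k * (m z k - y k) := by
    intro i
    funext z
    rw [(hfD z).fderiv, hLfapp]
    have h1 : ⟪m z - y, EuclideanSpace.single i (1:ℝ)⟫ = m z i - y i := by
      rw [EuclideanSpace.inner_single_right]
      simp [PiLp.sub_apply]
    have h2 : ⟪EuclideanSpace.single i (1:ℝ), ν z⟫ = ν z i := by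
      rw [EuclideanSpace.inner_single_left]; simp
    have h3 : ⟪ν z, m z - y⟫ = ∑ k : Fin n, ν z k * (m z k - y k) := by
      rw [PiLp.inner_apply]
      simp [RCLike.inner_apply, PiLp.sub_apply]; exact Finset.sum_congr rfl fun _ _ => mul_comm _ _
    rw [h1, h2, h3, Finset.mul_sum]
    rw [Finset.mul_sum]
    congr 1
    apply Finset.sum_congr rfl
    intro k _
    ring
  -- ## second derivatives of f
  have hνdiff : ∀ (i : Fin n) z, DifferentiableAt ℝ (fun w => ν w i) z := by
    intro i z
    exact (EuclideanSpace.proj i).differentiableAt.comp z ((hν.differentiable one_ne_zero) z)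
  have hmk : ∀ (k : Fin n) (z : EuclideanSpace ℝ (Fin n)),
      HasFDerivAt (fun w => m w k - y k) ((EuclideanSpace.proj k).comp (M z)) z := by
    intro k z
    exact ((EuclideanSpace.proj (𝕜 := ℝ) k).hasFDerivAt.comp z (hmD z)).sub_const (y k)
  have hq : ∀ (i k : Fin n), HasFDerivAt (fun w => ν w i * ν w k)
      (fderiv ℝ (fun w => ν w i * ν w k) x) x :=
    fun i k => ((hνdiff i x).mul (hνdiff k x)).hasFDerivAt
  have hGD : ∀ i : Fin n, HasFDerivAt
      (fun z => 2 * (m z i - y i) - 4 * ∑ k : Fin n, ν z i * ν z k * (m z k - y k))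
      ((2:ℝ) • ((EuclideanSpace.proj i).comp (M x)) - (4:ℝ) •
        (∑ k : Fin n, ((ν x i * ν x k) • ((EuclideanSpace.proj k).comp (M x))
          + (m x k - y k) • fderiv ℝ (fun w => ν w i * ν w k) x))) x := by
    intro i
    exact ((hmk i x).const_mul 2).sub
      ((HasFDerivAt.fun_sum (fun k _ => (hq i k).mul (hmk k x))).const_mul 4)
  have hGapp : ∀ i j : Fin n,
      ((2:ℝ) • ((EuclideanSpace.proj i).comp (M x)) - (4:ℝ) •
        (∑ k : Fin n, ((ν x i * ν x k) • ((EuclideanSpace.proj k).comp (M x))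
          + (m x k - y k) • fderiv ℝ (fun w => ν w i * ν w k) x))) (EuclideanSpace.single j 1)
      = 2 * (if i = j then (1:ℝ) else 0) -
          4 * ∑ k : Fin n,
            fderiv ℝ (fun w => ν w i * ν w k) x (EuclideanSpace.single j 1) * (m x k - y k) := by
    intro i j
    simp only [ContinuousLinearMap.sub_apply, ContinuousLinearMap.smul_apply,
      ContinuousLinearMap.sum_apply, ContinuousLinearMap.add_apply,
      ContinuousLinearMap.comp_apply, PiLp.proj_apply, smul_eq_mul, hMe]
    have hsplit : ∑ k : Fin n,
        (ν x i * ν x k * ((if k = j then (1:ℝ) else 0) - 2 * ν x j * ν x k)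
          + (m x k - y k) * fderiv ℝ (fun w => ν w i * ν w k) x (EuclideanSpace.single j 1))
        = (∑ k : Fin n, (if k = j then ν x i * ν x k else 0))
          - 2 * ν x j * ν x i * (∑ k : Fin n, ν x k * ν x k)
          + ∑ k : Fin n,
            fderiv ℝ (fun w => ν w i * ν w k) x (EuclideanSpace.single j 1) * (m x k - y k) := by
      have hterm : ∀ k : Fin n, ν x i * ν x k * ((if k = j then (1:ℝ) else 0) - 2 * ν x j * ν x k)
          + (m x k - y k) * fderiv ℝ (fun w => ν w i * ν w k) x (EuclideanSpace.single j 1)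
        = ((if k = j then ν x i * ν x k else 0) - 2 * ν x j * ν x i * (ν x k * ν x k))
          + fderiv ℝ (fun w => ν w i * ν w k) x (EuclideanSpace.single j 1) * (m x k - y k) := by
        intro k; by_cases hk : k = j <;> simp [hk] <;> ring
      simp_rw [hterm]
      rw [Finset.sum_add_distrib, Finset.sum_sub_distrib, ← Finset.mul_sum]
    rw [hsplit, Finset.sum_ite_eq' Finset.univ j (fun k => ν x i * ν x k), hνsum]
    simp only [Finset.mem_univ, if_true]
    ring
  refine ⟨hgrad.gradient, fun i j => by rw [hgi i, (hGD i).fderiv]; exact hGapp i j, ?_⟩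
  -- ## positivity
  have h4πτ : (0:ℝ) < 4 * Real.pi * (s - t) := mul_pos (by positivity) hτ
  have hρpos : 0 < ρ' x t := by
    rw [hρ x t]
    exact mul_pos (Real.rpow_pos_of_pos h4πτ _) (Real.exp_pos _)
  have hρ0 : ρ' x t ≠ 0 := ne_of_gt hρpos
  -- ## spatial derivative of ρ'
  have hρD : ∀ z, HasFDerivAt (fun w => ρ' w t)
      ((ρ' z t * (-(4*(s-t))⁻¹)) • Lf z) z := by
    intro z
    have hfun : (fun w => ρ' w t) = fun w =>
        (4 * Real.pi * (s - t)) ^ (-(((n : ℝ) - 1) / 2)) *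
          Real.exp (-‖m w - y‖ ^ 2 / (4 * (s - t))) := funext fun w => hρ w t
    rw [hfun]
    have h1 : HasFDerivAt (fun w => -‖m w - y‖^2 / (4*(s-t)))
        ((-(4*(s-t))⁻¹) • Lf z) z := by
      have heq : (fun w : EuclideanSpace ℝ (Fin n) => -‖m w - y‖^2 / (4*(s-t)))
          = fun w => (-(4*(s-t))⁻¹) • ‖m w - y‖^2 := by
        funext w; simp only [smul_eq_mul]; ring
      rw [heq]
      exact (hfD z).fun_const_smul _
    have h2 := (h1.exp).const_mul ((4 * Real.pi * (s - t)) ^ (-(((n : ℝ) - 1) / 2)))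
    refine h2.congr_fderiv ?_
    rw [smul_smul, smul_smul, ← hρ z t]
  have hρdval : ∀ z v, fderiv ℝ (fun w => ρ' w t) z v
      = ρ' z t * (-(4*(s-t))⁻¹) * Lf z v := by
    intro z v
    rw [(hρD z).fderiv]
    simp [ContinuousLinearMap.smul_apply, smul_eq_mul, mul_assoc]
  -- Lf x a in coordinates
  have hLfa : Lf x a = ∑ i : Fin n,
      a i * (2 * (m x i - y i) - 4 * ∑ k : Fin n, ν x i * ν x k * (m x k - y k)) := by
    rw [hLfapp]
    have h1 : ⟪m x - y, a⟫ = ∑ i : Fin n, (m x i - y i) * a i := by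
      rw [PiLp.inner_apply]; simp [RCLike.inner_apply, PiLp.sub_apply]; exact Finset.sum_congr rfl fun _ _ => mul_comm _ _
    have h2 : ⟪a, ν x⟫ = ∑ i : Fin n, a i * ν x i := by
      rw [PiLp.inner_apply]; simp [RCLike.inner_apply]; exact Finset.sum_congr rfl fun _ _ => mul_comm _ _
    have h3 : ⟪ν x, m x - y⟫ = ∑ k : Fin n, ν x k * (m x k - y k) := by
      rw [PiLp.inner_apply]; simp [RCLike.inner_apply, PiLp.sub_apply]; exact Finset.sum_congr rfl fun _ _ => mul_comm _ _
    rw [h1, h2, h3]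
    have hpt : ∀ i : Fin n,
        a i * (2 * (m x i - y i) - 4 * ∑ k : Fin n, ν x i * ν x k * (m x k - y k))
        = 2 * ((m x i - y i) * a i)
          - (a i * ν x i) * (4 * ∑ k : Fin n, ν x k * (m x k - y k)) := by
      intro i
      rw [show ∑ k : Fin n, ν x i * ν x k * (m x k - y k)
          = ν x i * ∑ k : Fin n, ν x k * (m x k - y k) from by
        rw [Finset.mul_sum]; exact Finset.sum_congr rfl fun k _ => by ring]
      ring
    simp_rw [hpt]
    rw [Finset.sum_sub_distrib, ← Finset.mul_sum, ← Finset.sum_mul]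
    ring
  -- second spatial derivative of ρ'
  have hρdj : ∀ (j : Fin n), (fun z => fderiv ℝ (fun w => ρ' w t) z (EuclideanSpace.single j 1))
      = fun z => (-(4*(s-t))⁻¹) * (ρ' z t *
          (2 * (m z j - y j) - 4 * ∑ k : Fin n, ν z j * ν z k * (m z k - y k))) := by
    intro j
    funext z
    rw [hρdval]
    rw [show Lf z (EuclideanSpace.single j 1)
        = 2 * (m z j - y j) - 4 * ∑ k : Fin n, ν z j * ν z k * (m z k - y k) from by
      rw [← (hfD z).fderiv]; exact congrFun (hgi j) z]
    ring
  have hρ2 : ∀ i j : Fin n,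
      fderiv ℝ (fun z => fderiv ℝ (fun w => ρ' w t) z (EuclideanSpace.single j 1)) x
        (EuclideanSpace.single i 1)
      = (-(4*(s-t))⁻¹) * ((ρ' x t * (-(4*(s-t))⁻¹) *
            (2 * (m x i - y i) - 4 * ∑ k : Fin n, ν x i * ν x k * (m x k - y k))) *
            (2 * (m x j - y j) - 4 * ∑ k : Fin n, ν x j * ν x k * (m x k - y k))
          + ρ' x t * (2 * (if j = i then (1:ℝ) else 0) -
              4 * ∑ k : Fin n, fderiv ℝ (fun w => ν w j * ν w k) x (EuclideanSpace.single i 1)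
                * (m x k - y k))) := by
    intro i j
    rw [hρdj j]
    have hD := ((hρD x).fun_mul (hGD j)).const_mul (-(4*(s-t))⁻¹)
    rw [hD.fderiv]
    simp only [ContinuousLinearMap.smul_apply, ContinuousLinearMap.add_apply, smul_eq_mul]
    rw [hGapp j i]
    rw [show Lf x (EuclideanSpace.single i 1)
        = 2 * (m x i - y i) - 4 * ∑ k : Fin n, ν x i * ν x k * (m x k - y k) from by
      rw [← (hfD x).fderiv]; exact congrFun (hgi i) x]
    ring
  -- time derivative of ρ'
  have hTd : deriv (fun τ' => ρ' x τ') t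
      = ρ' x t * ((((n:ℝ)-1)/(2*(s-t))) - ‖m x - y‖^2/(4*(s-t)^2)) := by
    have hfun : (fun τ' => ρ' x τ') = fun τ' =>
        (4 * Real.pi * (s - τ')) ^ (-(((n : ℝ) - 1) / 2)) *
          Real.exp (-‖m x - y‖ ^ 2 / (4 * (s - τ'))) := funext fun τ' => hρ x τ'
    rw [hfun]
    have h1 : HasDerivAt (fun τ' : ℝ => 4 * Real.pi * (s - τ')) (4 * Real.pi * (-1)) t := by
      simpa using ((hasDerivAt_id t).const_sub s).const_mul (4 * Real.pi)
    have h2 := h1.rpow_const (p := -(((n:ℝ)-1)/2)) (Or.inl (ne_of_gt h4πτ))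
    have h1' : HasDerivAt (fun τ' : ℝ => 4 * (s - τ')) (4 * (-1)) t := by
      simpa using ((hasDerivAt_id t).const_sub s).const_mul (4:ℝ)
    have h3 := (hasDerivAt_const t (-‖m x - y‖^2)).fun_div h1'
      (by simpa using mul_ne_zero (four_ne_zero) hτ0)
    have h4 := h3.exp
    have h5 := h2.fun_mul h4
    rw [h5.deriv]
    rw [Real.rpow_sub_one (ne_of_gt h4πτ)]
    rw [hρ x t]
    field_simp [Real.pi_ne_zero, hτ0]
    ring
  rw [hρdval x a, hLfa, hTd]
  simp only [hρ2]
  -- ### sum identities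
  -- (n-1) identity
  have hδrow : ∀ i : Fin n, ∑ j : Fin n,
      (((if i = j then (1:ℝ) else 0) - a i * a j) * (if j = i then (1:ℝ) else 0))
      = 1 - a i * a i := by
    intro i
    rw [Finset.sum_eq_single i]
    · simp
    · intro j _ hj; simp [hj]
    · intro h; exact absurd (Finset.mem_univ i) h
  have hSδ : ∑ i : Fin n, ∑ j : Fin n,
      (((if i = j then (1:ℝ) else 0) - a i * a j) * (if j = i then (1:ℝ) else 0))
      = (n:ℝ) - 1 := by
    simp_rw [hδrow]
    rw [Finset.sum_sub_distrib, hasum]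
    simp [Finset.card_univ]
  -- G-square identity
  have hGP : ∀ i : Fin n, (2 * (m x i - y i) - 4 * ∑ k : Fin n, ν x i * ν x k * (m x k - y k))
      = 2 * (m x i - y i) - 4 * (ν x i * ∑ k : Fin n, ν x k * (m x k - y k)) := by
    intro i
    rw [show ∑ k : Fin n, ν x i * ν x k * (m x k - y k)
        = ν x i * ∑ k : Fin n, ν x k * (m x k - y k) from by
      rw [Finset.mul_sum]; exact Finset.sum_congr rfl fun k _ => by ring]
  have hGsq : ∑ i : Fin n,
      (2 * (m x i - y i) - 4 * ∑ k : Fin n, ν x i * ν x k * (m x k - y k)) *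
      (2 * (m x i - y i) - 4 * ∑ k : Fin n, ν x i * ν x k * (m x k - y k))
      = 4 * ‖m x - y‖^2 := by
    simp_rw [hGP]
    have hpt2 : ∀ i : Fin n,
        (2 * (m x i - y i) - 4 * (ν x i * ∑ k : Fin n, ν x k * (m x k - y k))) *
        (2 * (m x i - y i) - 4 * (ν x i * ∑ k : Fin n, ν x k * (m x k - y k)))
        = 4 * ((m x i - y i) * (m x i - y i))
          - (16 * ∑ k : Fin n, ν x k * (m x k - y k)) * (ν x i * (m x i - y i))
          + (16 * ((∑ k : Fin n, ν x k * (m x k - y k)) *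
              (∑ k : Fin n, ν x k * (m x k - y k)))) * (ν x i * ν x i) := by
      intro i; ring
    simp_rw [hpt2]
    rw [Finset.sum_add_distrib, Finset.sum_sub_distrib, ← Finset.mul_sum, ← Finset.mul_sum,
      ← Finset.mul_sum, husum, hνsum]
    ring
  -- (I - a ⊗ a) against G ⊗ G
  have hptg : ∀ i j : Fin n, (((if i = j then (1:ℝ) else 0) - a i * a j) *
      ((2 * (m x i - y i) - 4 * ∑ k : Fin n, ν x i * ν x k * (m x k - y k)) *
       (2 * (m x j - y j) - 4 * ∑ k : Fin n, ν x j * ν x k * (m x k - y k))))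
      = (if j = i then
          (2 * (m x i - y i) - 4 * ∑ k : Fin n, ν x i * ν x k * (m x k - y k)) *
          (2 * (m x j - y j) - 4 * ∑ k : Fin n, ν x j * ν x k * (m x k - y k)) else 0)
        - (a i * (2 * (m x i - y i) - 4 * ∑ k : Fin n, ν x i * ν x k * (m x k - y k))) *
          (a j * (2 * (m x j - y j) - 4 * ∑ k : Fin n, ν x j * ν x k * (m x k - y k))) := by
    intro i j
    by_cases h : i = j
    · subst h; simp; ring
    · simp [h, Ne.symm h]; ring
  have hrowg : ∀ i : Fin n, ∑ j : Fin n,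
      ((if j = i then
          (2 * (m x i - y i) - 4 * ∑ k : Fin n, ν x i * ν x k * (m x k - y k)) *
          (2 * (m x j - y j) - 4 * ∑ k : Fin n, ν x j * ν x k * (m x k - y k)) else 0)
        - (a i * (2 * (m x i - y i) - 4 * ∑ k : Fin n, ν x i * ν x k * (m x k - y k))) *
          (a j * (2 * (m x j - y j) - 4 * ∑ k : Fin n, ν x j * ν x k * (m x k - y k))))
      = (2 * (m x i - y i) - 4 * ∑ k : Fin n, ν x i * ν x k * (m x k - y k)) *
        (2 * (m x i - y i) - 4 * ∑ k : Fin n, ν x i * ν x k * (m x k - y k))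
        - (a i * (2 * (m x i - y i) - 4 * ∑ k : Fin n, ν x i * ν x k * (m x k - y k))) *
          ∑ j : Fin n, a j * (2 * (m x j - y j) - 4 * ∑ k : Fin n, ν x j * ν x k * (m x k - y k)) := by
    intro i
    rw [Finset.sum_sub_distrib, Finset.sum_ite_eq' Finset.univ i, ← Finset.mul_sum]
    simp
  have hSgg : ∑ i : Fin n, ∑ j : Fin n, (((if i = j then (1:ℝ) else 0) - a i * a j) *
      ((2 * (m x i - y i) - 4 * ∑ k : Fin n, ν x i * ν x k * (m x k - y k)) *
       (2 * (m x j - y j) - 4 * ∑ k : Fin n, ν x j * ν x k * (m x k - y k))))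
      = 4 * ‖m x - y‖^2
        - (∑ i : Fin n, a i * (2 * (m x i - y i) - 4 * ∑ k : Fin n, ν x i * ν x k * (m x k - y k)))^2 := by
    simp_rw [hptg, hrowg]
    rw [Finset.sum_sub_distrib, ← Finset.sum_mul, hGsq]
    ring
  -- index swap for the ν-variation term
  have hwsymm : ∀ i j : Fin n, ((if j = i then (1:ℝ) else 0) - a j * a i)
      = ((if i = j then (1:ℝ) else 0) - a i * a j) := by
    intro i j
    by_cases h : i = j
    · subst h; rfl
    · simp [h, Ne.symm h, mul_comm]
  have hSsw : ∑ i : Fin n, ∑ j : Fin n, (((if i = j then (1:ℝ) else 0) - a i * a j) *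
        ∑ k : Fin n, fderiv ℝ (fun w => ν w j * ν w k) x (EuclideanSpace.single i 1) * (m x k - y k))
      = ∑ i : Fin n, ∑ j : Fin n, (((if i = j then (1:ℝ) else 0) - a i * a j) *
        ∑ k : Fin n, fderiv ℝ (fun w => ν w i * ν w k) x (EuclideanSpace.single j 1) * (m x k - y k)) := by
    rw [Finset.sum_comm]
    refine Finset.sum_congr rfl fun i _ => Finset.sum_congr rfl fun j _ => ?_
    rw [hwsymm]
  -- assembling the middle double sum
  have hpt : ∀ i j : Fin n, (((if i = j then (1:ℝ) else 0) - a i * a j) *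
      (-(4*(s-t))⁻¹ * (ρ' x t * -(4*(s-t))⁻¹ *
          (2 * (m x i - y i) - 4 * ∑ k : Fin n, ν x i * ν x k * (m x k - y k)) *
          (2 * (m x j - y j) - 4 * ∑ k : Fin n, ν x j * ν x k * (m x k - y k))
        + ρ' x t * (2 * (if j = i then (1:ℝ) else 0) -
            4 * ∑ k : Fin n, fderiv ℝ (fun w => ν w j * ν w k) x (EuclideanSpace.single i 1)
              * (m x k - y k)))))
      = (ρ' x t * ((4*(s-t))⁻¹ * (4*(s-t))⁻¹)) *
          (((if i = j then (1:ℝ) else 0) - a i * a j) *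
            ((2 * (m x i - y i) - 4 * ∑ k : Fin n, ν x i * ν x k * (m x k - y k)) *
             (2 * (m x j - y j) - 4 * ∑ k : Fin n, ν x j * ν x k * (m x k - y k))))
        + ((-2*(4*(s-t))⁻¹) * ρ' x t) *
          (((if i = j then (1:ℝ) else 0) - a i * a j) * (if j = i then (1:ℝ) else 0))
        + ((4*(4*(s-t))⁻¹) * ρ' x t) *
          (((if i = j then (1:ℝ) else 0) - a i * a j) *
            ∑ k : Fin n, fderiv ℝ (fun w => ν w j * ν w k) x (EuclideanSpace.single i 1)
              * (m x k - y k)) := by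
    intro i j; ring
  simp_rw [hpt]
  simp only [Finset.sum_add_distrib, ← Finset.mul_sum]
  rw [hSgg, hSδ, hSsw]
  -- the right-hand side
  rw [show ∑ i : Fin n, ∑ j : Fin n, ∑ k : Fin n,
      (((if i = j then (1:ℝ) else 0) - a i * a j) *
        fderiv ℝ (fun w => ν w i * ν w k) x (EuclideanSpace.single j 1) * (m x k - y k) / (s - t))
      = (∑ i : Fin n, ∑ j : Fin n, (((if i = j then (1:ℝ) else 0) - a i * a j) *
          ∑ k : Fin n, fderiv ℝ (fun w => ν w i * ν w k) x (EuclideanSpace.single j 1)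
            * (m x k - y k))) * (s - t)⁻¹ from by
    have hone : ∀ i j : Fin n, ∑ k : Fin n,
        (((if i = j then (1:ℝ) else 0) - a i * a j) *
          fderiv ℝ (fun w => ν w i * ν w k) x (EuclideanSpace.single j 1) * (m x k - y k) / (s - t))
        = (((if i = j then (1:ℝ) else 0) - a i * a j) *
            ∑ k : Fin n, fderiv ℝ (fun w => ν w i * ν w k) x (EuclideanSpace.single j 1)
              * (m x k - y k)) * (s - t)⁻¹ := by
      intro i j
      rw [← Finset.sum_div, div_eq_mul_inv]
      congr 1
      rw [Finset.mul_sum]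
      exact Finset.sum_congr rfl fun k _ => by ring
    simp_rw [hone, ← Finset.sum_mul]]
  -- first term
  rw [show (ρ' x t * -(4*(s-t))⁻¹ * ∑ i : Fin n,
      a i * (2 * (m x i - y i) - 4 * ∑ k : Fin n, ν x i * ν x k * (m x k - y k)))^2 / ρ' x t
      = ρ' x t * ((4*(s-t))⁻¹ * (4*(s-t))⁻¹) *
        (∑ i : Fin n, a i * (2 * (m x i - y i) - 4 * ∑ k : Fin n, ν x i * ν x k * (m x k - y k)))^2
      from by rw [div_eq_iff hρ0]; ring]
  generalize s - t = τ
  ring
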